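/- arXiv:2202.05646 — 5 statements merged into one kernel-verified Lean document; each statement's English description precedes it below -/
import Mathlib

section
/- Let l ∈ ℤ with l ≠ 0, let a ∈ ℂ with a ≠ 0, and let h be a holomorphic function on the unit disc 𝔻. If the map z ↦ a·z^l·(1 + z·h(z)) is injective on the punctured unit disc 𝔻*, then l = 1 or l = −1. -/
open Complex Metric Set Filter Topology

/-- If `z ↦ a·z^l·(1 + z·h(z))` (with `a ≠ 0`, `l ∈ ℤ` nonzero, `h`
holomorphic on the unit disc) is injective on the punctured unit disc, then `l = 1`
or `l = -1`. -/
theorem injective_zpow_factor_order_pm_one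
    (l : ℤ) (hl : l ≠ 0) (a : ℂ) (ha : a ≠ 0)
    (h : ℂ → ℂ) (hh : DifferentiableOn ℂ h (ball (0 : ℂ) 1))
    (hinj : InjOn (fun z : ℂ => a * z ^ l * (1 + z * h z))
      (ball (0 : ℂ) 1 \ {0})) :
    l = 1 ∨ l = -1 := by
  by_contra hcon
  push_neg at hcon
  obtain ⟨hl1, hl2⟩ := hcon
  have hlC : (l : ℂ) ≠ 0 := Int.cast_ne_zero.mpr hl
  -- the root of unity
  set ζ : ℂ := Complex.exp (2 * Real.pi * I / l) with hζdef
  have hζl : ζ ^ l = 1 := by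
    rw [hζdef, ← Complex.exp_int_mul]
    rw [mul_div_cancel₀ _ hlC, Complex.exp_two_pi_mul_I]
  have hζ1 : ζ ≠ 1 := by
    intro hc
    rw [hζdef, Complex.exp_eq_one_iff] at hc
    obtain ⟨n, hn⟩ := hc
    have h2 : (2 * Real.pi * I : ℂ) ≠ 0 := by
      simp [Real.pi_ne_zero, I_ne_zero]
    have hn2 : (2 * Real.pi * I : ℂ) = n * (2 * Real.pi * I) * l := by
      rw [← hn]; field_simp
    have h4 : (2 * Real.pi * I : ℂ) * ((n * l : ℤ) : ℂ)
        = (2 * Real.pi * I) * ((1 : ℤ) : ℂ) := by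
      push_cast; linear_combination (-1 : ℂ) * hn2
    have hln : n * l = 1 := Int.cast_injective (mul_left_cancel₀ h2 h4)
    have : IsUnit l := IsUnit.of_mul_eq_one n (mul_comm n l ▸ hln)
    rcases Int.isUnit_iff.mp this with h' | h' <;> tauto
  have hζ0 : ζ ≠ 0 := Complex.exp_ne_zero _
  have hζabs : ‖ζ‖ = 1 := by
    rw [hζdef, Complex.norm_exp]
    have : (2 * Real.pi * I / l : ℂ).re = 0 := by
      simp [Complex.div_re, Complex.mul_re]
    rw [this, Real.exp_zero]
  -- u and its properties
  set u : ℂ → ℂ := fun z => 1 + z * h z with hudef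
  have hu0 : u 0 = 1 := by simp [hudef]
  have huA : AnalyticAt ℂ u 0 := by
    have hhA : AnalyticAt ℂ h 0 :=
      hh.analyticAt (isOpen_ball.mem_nhds (by simp))
    exact analyticAt_const.add ((analyticAt_id).mul hhA)
  -- choose r so that u is close to 1 on ball 0 r
  have hcont : ContinuousAt u 0 := huA.continuousAt
  have : ∀ᶠ z in 𝓝 (0 : ℂ), ‖u z - 1‖ < 1/2 := by
    have := hcont.tendsto
    rw [hu0] at this
    have h2 : {w : ℂ | ‖w - 1‖ < 1/2} ∈ 𝓝 (1 : ℂ) := by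
      have : IsOpen {w : ℂ | ‖w - 1‖ < 1/2} :=
        isOpen_lt (by continuity) continuous_const
      exact this.mem_nhds (by simp)
    exact this h2
  obtain ⟨r, hr0, hrball⟩ := Metric.eventually_nhds_iff_ball.mp this
  set r' : ℝ := min r 1 with hr'def
  have hr'0 : 0 < r' := lt_min hr0 one_pos
  have hball1 : ball (0:ℂ) r' ⊆ ball 0 1 := ball_subset_ball (min_le_right _ _)
  have hballr : ball (0:ℂ) r' ⊆ ball 0 r := ball_subset_ball (min_le_left _ _)
  have hune : ∀ z ∈ ball (0:ℂ) r', u z ≠ 0 := by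
    intro z hz
    have := hrball z (hballr hz)
    intro hc
    rw [hc] at this
    simp at this
    norm_num at this
  -- φ and ψ
  set φ : ℂ → ℂ := fun z => Complex.exp ((l : ℂ)⁻¹ * Complex.log (u z)) with hφdef
  set ψ : ℂ → ℂ := fun z => z * φ z with hψdef
  have hφpow : ∀ z ∈ ball (0:ℂ) r', φ z ^ l = u z := by
    intro z hz
    rw [hφdef]
    simp only
    rw [← Complex.exp_int_mul, ← mul_assoc, mul_inv_cancel₀ hlC, one_mul,
      Complex.exp_log (hune z hz)]
  have hφ0 : φ 0 = 1 := by
    rw [hφdef]; simp [hu0]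
  -- ψ is analytic at 0
  have hψA : AnalyticAt ℂ ψ 0 := by
    have hlogA : AnalyticAt ℂ (fun z => Complex.log (u z)) 0 := by
      apply (analyticAt_clog _).comp huA
      rw [hu0]; exact Complex.one_mem_slitPlane
    have hφA : AnalyticAt ℂ φ 0 :=
      analyticAt_cexp.comp (analyticAt_const.mul hlogA)
    exact (analyticAt_id).mul hφA
  -- ψ has derivative 1 at 0
  have hder : deriv ψ 0 = 1 := by
    have hφd : DifferentiableAt ℂ φ 0 := by
      have hlogA : AnalyticAt ℂ (fun z => Complex.log (u z)) 0 := by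
        apply (analyticAt_clog _).comp huA
        rw [hu0]; exact Complex.one_mem_slitPlane
      exact (analyticAt_cexp.comp (analyticAt_const.mul hlogA)).differentiableAt
    have := (hasDerivAt_id (0:ℂ)).mul hφd.hasDerivAt
    have h' := this.deriv
    have h'' : deriv (id * φ) 0 = 1 := by simpa [hφ0] using h'
    exact h''
  -- ψ is not eventually constant
  have hnotconst : ¬ ∀ᶠ z in 𝓝 (0:ℂ), ψ z = ψ 0 := by
    intro hc
    have : deriv ψ 0 = deriv (fun _ : ℂ => ψ 0) 0 := Filter.EventuallyEq.deriv_eq hc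
    rw [hder] at this
    simp at this
  have hopen := hψA.eventually_constant_or_nhds_le_map_nhds.resolve_left hnotconst
  have hψ0 : ψ 0 = 0 := by simp [hψdef]
  rw [hψ0] at hopen
  -- image of small ball is a neighborhood of 0
  have himg : ψ '' (ball 0 r') ∈ 𝓝 (0:ℂ) := by
    apply hopen
    rw [Filter.mem_map]
    exact Filter.mem_of_superset (ball_mem_nhds _ hr'0) (subset_preimage_image _ _)
  obtain ⟨ε, hε0, hεball⟩ := Metric.mem_nhds_iff.mp himg
  -- the point w
  set w : ℂ := ((ε/2 : ℝ) : ℂ) with hwdef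
  have hw0 : w ≠ 0 := by
    rw [hwdef]
    simp only [ne_eq, Complex.ofReal_eq_zero]
    positivity
  have hwmem : w ∈ ball (0:ℂ) ε := by
    rw [mem_ball, dist_zero_right, hwdef]
    simp only [Complex.norm_real, Real.norm_eq_abs]
    rw [abs_of_pos (by positivity)]
    linarith
  have hζwmem : ζ * w ∈ ball (0:ℂ) ε := by
    rw [mem_ball, dist_zero_right]
    rw [show ‖ζ * w‖ = ‖ζ‖ * ‖w‖ by simp]
    rw [hζabs, one_mul]
    have := hwmem
    rw [mem_ball, dist_zero_right] at this
    simpa using this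
  obtain ⟨z₁, hz₁ball, hz₁⟩ := hεball hwmem
  obtain ⟨z₂, hz₂ball, hz₂⟩ := hεball hζwmem
  have hz₁0 : z₁ ≠ 0 := by
    intro hc
    rw [hc, hψ0] at hz₁
    exact hw0 hz₁.symm
  have hz₂0 : z₂ ≠ 0 := by
    intro hc
    rw [hc, hψ0] at hz₂
    exact (mul_ne_zero hζ0 hw0) hz₂.symm
  -- rewrite f in terms of ψ
  have hfψ : ∀ z ∈ ball (0:ℂ) r', a * z ^ l * u z = a * (ψ z) ^ l := by
    intro z hz
    rw [hψdef]
    simp only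
    rw [mul_zpow, ← hφpow z hz, mul_assoc]
  have hfz₁ : a * z₁ ^ l * u z₁ = a * w ^ l := by
    rw [hfψ z₁ hz₁ball, hz₁]
  have hfz₂ : a * z₂ ^ l * u z₂ = a * w ^ l := by
    rw [hfψ z₂ hz₂ball, hz₂, mul_zpow, hζl, one_mul]
  have hmem₁ : z₁ ∈ ball (0:ℂ) 1 \ {0} := ⟨hball1 hz₁ball, hz₁0⟩
  have hmem₂ : z₂ ∈ ball (0:ℂ) 1 \ {0} := ⟨hball1 hz₂ball, hz₂0⟩
  have heq : z₁ = z₂ := hinj hmem₁ hmem₂ (by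
    simp only
    rw [← hudef] at *
    rw [hfz₁, hfz₂])
  rw [heq, hz₂] at hz₁
  exact hζ1 (mul_right_cancel₀ hw0 (hz₁.trans (one_mul w).symm))
end

section
/- Let f be a holomorphic function on the punctured unit disc 𝔻* that is injective on 𝔻*. Then the derivative f′ is nonvanishing on 𝔻*, and the Schwarzian derivative S(f), which is holomorphic on 𝔻*, extends to a holomorphic function on the entire unit disc 𝔻. -/
open Complex Metric Set Filter Topology

/-- The Schwarzian derivative `S(f) = (f''/f')' - (1/2)·(f''/f')²`. -/
noncomputable def schwarzian (f : ℂ → ℂ) (z : ℂ) : ℂ :=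
  deriv (fun w => deriv (deriv f) w / deriv f w) z
    - (1 / 2) * (deriv (deriv f) z / deriv f z) ^ 2


lemma exists_pair_ne_of_eventually {P : ℂ → Prop} {z₀ : ℂ} (h : ∀ᶠ z in 𝓝 z₀, P z) :
    ∃ z₁ z₂, z₁ ≠ z₂ ∧ z₁ ≠ z₀ ∧ z₂ ≠ z₀ ∧ P z₁ ∧ P z₂ := by
  have h1 : ∀ᶠ z in 𝓝[≠] z₀, P z := nhdsWithin_le_nhds h
  obtain ⟨z₁, hz₁P, hz₁⟩ := (h1.and self_mem_nhdsWithin).exists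
  have hmem : {z₁}ᶜ ∈ 𝓝 z₀ := isOpen_compl_singleton.mem_nhds (by simpa [eq_comm] using hz₁)
  have h2 : ∀ᶠ z in 𝓝[≠] z₀, P z ∧ z ≠ z₁ := h1.and (nhdsWithin_le_nhds hmem)
  obtain ⟨z₂, ⟨hz₂P, hz₂ne⟩, hz₂⟩ := (h2.and self_mem_nhdsWithin).exists
  exact ⟨z₁, z₂, fun h => hz₂ne h.symm, hz₁, hz₂, hz₁P, hz₂P⟩

lemma key_deriv_ne_zero {F : ℂ → ℂ} {z₀ : ℂ} {s : Set ℂ}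
    (hs : s ∈ 𝓝 z₀) (hF : AnalyticAt ℂ F z₀)
    (hinj : Set.InjOn F (s \ {z₀})) : deriv F z₀ ≠ 0 := by
  intro hd0
  set g : ℂ → ℂ := fun z => F z - F z₀ with hgdef
  have hga : AnalyticAt ℂ g z₀ := hF.sub analyticAt_const
  have hsev : ∀ᶠ z in 𝓝 z₀, z ∈ s := hs
  -- rule out order = ⊤
  rcases eq_or_ne (analyticOrderAt g z₀) ⊤ with htop | hne
  · have hev : ∀ᶠ z in 𝓝 z₀, F z = F z₀ ∧ z ∈ s := by
      filter_upwards [analyticOrderAt_eq_top.1 htop, hsev] with z hz hzs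
      exact ⟨sub_eq_zero.1 hz, hzs⟩
    obtain ⟨z₁, z₂, h12, h10, h20, hP1, hP2⟩ := exists_pair_ne_of_eventually hev
    exact h12 (hinj ⟨hP1.2, h10⟩ ⟨hP2.2, h20⟩ (hP1.1.trans hP2.1.symm))
  -- order = n : ℕ
  obtain ⟨n, horder⟩ : ∃ n : ℕ, analyticOrderAt g z₀ = (n : ℕ∞) := ⟨(analyticOrderAt g z₀).toNat, (ENat.coe_toNat hne).symm⟩
  obtain ⟨h, hh, hh0, hev⟩ := (hga.analyticOrderAt_eq_natCast (n := n)).1 horder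
  have hgz₀ : g z₀ = 0 := by simp [hgdef]
  -- n ≠ 0
  have hn0 : n ≠ 0 := by
    rintro rfl
    apply hh0
    have := hev.self_of_nhds
    simpa [hgz₀] using this.symm
  -- n ≠ 1
  have hn1 : n ≠ 1 := by
    rintro rfl
    have hd : HasDerivAt g (h z₀) z₀ := by
      have h1 : HasDerivAt (fun z => (z - z₀) * h z) ((1 : ℂ) * h z₀ + (z₀ - z₀) * deriv h z₀) z₀ :=
        ((hasDerivAt_id z₀).sub_const z₀).mul hh.differentiableAt.hasDerivAt
      have h2 : HasDerivAt (fun z => (z - z₀) * h z) (h z₀) z₀ := by simpa using h1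
      exact h2.congr_of_eventuallyEq (by filter_upwards [hev] with z hz; simpa using hz)
    have : deriv g z₀ = h z₀ := hd.deriv
    have hdg : deriv g z₀ = 0 := by
      have : deriv g z₀ = deriv F z₀ := by
        simp only [hgdef]
        exact deriv_sub_const _
      rw [this, hd0]
    exact hh0 (by rw [← hd.deriv, hdg])
  have hn2 : 2 ≤ n := by omega
  -- construct n-th root
  obtain ⟨c, hc⟩ := IsAlgClosed.exists_pow_nat_eq (h z₀) (by omega : 0 < n)
  have hc0 : c ≠ 0 := by
    intro hc0; rw [hc0] at hc; exact hh0 (by simpa [zero_pow hn0] using hc.symm)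
  set q : ℂ → ℂ := fun z => c * Complex.exp (Complex.log (h z / h z₀) / n) with hqdef
  have hqa : AnalyticAt ℂ q z₀ := by
    apply analyticAt_const.mul
    apply AnalyticAt.cexp
    apply AnalyticAt.div _ analyticAt_const (by exact_mod_cast (Nat.cast_ne_zero (R := ℂ)).2 hn0)
    exact (hh.div analyticAt_const hh0).clog (by simpa [div_self hh0] using Complex.one_mem_slitPlane)
  have hq0 : q z₀ = c := by simp [hqdef, div_self hh0, Complex.log_one]
  have hqev : ∀ᶠ z in 𝓝 z₀, q z ^ n = h z := by
    have hne0 : ∀ᶠ z in 𝓝 z₀, h z ≠ 0 := hh.continuousAt.eventually_ne hh0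
    filter_upwards [hne0] with z hz
    have : Complex.exp (Complex.log (h z / h z₀) / n) ^ n = h z / h z₀ := by
      rw [← Complex.exp_nat_mul]
      rw [mul_div_cancel₀ _ (by exact_mod_cast (Nat.cast_ne_zero (R := ℂ)).2 hn0)]
      exact Complex.exp_log (div_ne_zero hz hh0)
    simp only [hqdef, mul_pow, this, hc]
    field_simp
  set φ : ℂ → ℂ := fun z => (z - z₀) * q z with hφdef
  have hφa : AnalyticAt ℂ φ z₀ := (analyticAt_id.sub analyticAt_const).mul hqa
  have hφz₀ : φ z₀ = 0 := by simp [hφdef]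
  have hφd : HasDerivAt φ c z₀ := by
    have h1 : HasDerivAt φ ((1 : ℂ) * q z₀ + (z₀ - z₀) * deriv q z₀) z₀ :=
      ((hasDerivAt_id z₀).sub_const z₀).mul hqa.differentiableAt.hasDerivAt
    simpa [hq0] using h1
  have hφs : HasStrictDerivAt φ c z₀ := by
    have := (hφa.contDiffAt (n := 1)).hasStrictDerivAt one_ne_zero
    rwa [hφd.deriv] at this
  set E := hφs.hasStrictFDerivAt_equiv hc0 with hEdef
  set Ψ : ℂ → ℂ := E.localInverse _ _ _ with hΨdef
  -- the n-th root of unity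
  set ζ : ℂ := Complex.exp (2 * Real.pi * Complex.I / n) with hζdef
  have hζn : ζ ^ n = 1 := by
    rw [hζdef, ← Complex.exp_nat_mul,
      mul_div_cancel₀ _ (by exact_mod_cast (Nat.cast_ne_zero (R := ℂ)).2 hn0)]
    exact Complex.exp_two_pi_mul_I
  have hζ1 : ζ ≠ 1 := by
    rw [hζdef]
    intro hone
    obtain ⟨k, hk⟩ := Complex.exp_eq_one_iff.1 hone
    have h2pi : (2 * (Real.pi : ℂ) * Complex.I : ℂ) ≠ 0 :=
      mul_ne_zero (mul_ne_zero two_ne_zero (Complex.ofReal_ne_zero.2 Real.pi_ne_zero))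
        Complex.I_ne_zero
    have hnℂ : (n : ℂ) ≠ 0 := (Nat.cast_ne_zero (R := ℂ)).2 hn0
    have hkn : (k : ℂ) * n = 1 := by
      have h1 : (2 * (Real.pi:ℂ) * Complex.I) * 1 = (2 * (Real.pi:ℂ) * Complex.I) * ((k:ℂ) * n) := by
        rw [div_eq_iff hnℂ] at hk
        linear_combination hk
      have := mul_left_cancel₀ h2pi h1
      exact this.symm
    have hknZ : (k * n : ℤ) = 1 := by exact_mod_cast hkn
    have hdvd : (n : ℤ) ∣ 1 := Dvd.intro k (by linarith)
    have := Int.le_of_dvd one_pos hdvd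
    have : (2 : ℤ) ≤ n := by exact_mod_cast hn2
    omega
  have hζ0 : ζ ≠ 0 := Complex.exp_ne_zero _
  have hright : ∀ᶠ y in 𝓝 (0:ℂ), φ (E.localInverse _ _ _ y) = y := by
    have := E.eventually_right_inverse
    rwa [hφz₀] at this
  set Ψ : ℂ → ℂ := E.localInverse _ _ _ with hΨdef2
  have hΨ0 : Ψ 0 = z₀ := by
    have := E.localInverse_apply_image
    rwa [hφz₀] at this
  have hΨcont : Tendsto Ψ (𝓝 0) (𝓝 z₀) := by
    have h1 := E.localInverse_continuousAt
    rw [hφz₀] at h1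
    have h2 : Tendsto Ψ (𝓝 0) (𝓝 (Ψ 0)) := h1
    rwa [hΨ0] at h2
  have hT : ∀ᶠ z in 𝓝 z₀, g z = φ z ^ n ∧ z ∈ s := by
    filter_upwards [hev, hqev, hsev] with z e1 e2 e3
    refine ⟨?_, e3⟩
    rw [e1, smul_eq_mul, hφdef]
    simp only [mul_pow, e2]
  have tmul : Tendsto (fun w : ℂ => ζ * w) (𝓝 0) (𝓝 0) := by
    simpa using (continuous_mul_left ζ).tendsto (0:ℂ)
  have hall : ∀ᶠ w in 𝓝[≠] (0:ℂ),
      φ (Ψ w) = w ∧ φ (Ψ (ζ * w)) = ζ * w ∧ (g (Ψ w) = φ (Ψ w) ^ n ∧ Ψ w ∈ s)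
        ∧ (g (Ψ (ζ*w)) = φ (Ψ (ζ*w)) ^ n ∧ Ψ (ζ*w) ∈ s) ∧ w ≠ 0 := by
    have A : ∀ᶠ w in 𝓝[≠] (0:ℂ), φ (Ψ w) = w := hright.filter_mono nhdsWithin_le_nhds
    have B : ∀ᶠ w in 𝓝[≠] (0:ℂ), φ (Ψ (ζ * w)) = ζ * w :=
      (tmul.eventually hright).filter_mono nhdsWithin_le_nhds
    have C : ∀ᶠ w in 𝓝[≠] (0:ℂ), g (Ψ w) = φ (Ψ w) ^ n ∧ Ψ w ∈ s :=
      (hΨcont.eventually hT).filter_mono nhdsWithin_le_nhds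
    have D : ∀ᶠ w in 𝓝[≠] (0:ℂ), g (Ψ (ζ*w)) = φ (Ψ (ζ*w)) ^ n ∧ Ψ (ζ*w) ∈ s :=
      ((hΨcont.comp tmul).eventually hT).filter_mono nhdsWithin_le_nhds
    have Z : ∀ᶠ w in 𝓝[≠] (0:ℂ), w ≠ 0 := by
      filter_upwards [self_mem_nhdsWithin] with w hw
      exact hw
    exact A.and (B.and (C.and (D.and Z)))
  obtain ⟨w, e1, e2, ⟨e3, e3s⟩, ⟨e4, e4s⟩, hw0⟩ := hall.exists
  have hζw0 : ζ * w ≠ 0 := mul_ne_zero hζ0 hw0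
  have hz₁0 : Ψ w ≠ z₀ := fun hh => hw0 (by rw [← e1, hh, hφz₀])
  have hz₂0 : Ψ (ζ * w) ≠ z₀ := fun hh => hζw0 (by rw [← e2, hh, hφz₀])
  have hz₁₂ : Ψ w ≠ Ψ (ζ * w) := by
    intro hh
    apply hζ1
    have hww : w = ζ * w := by
      calc w = φ (Ψ w) := e1.symm
        _ = φ (Ψ (ζ * w)) := by rw [hh]
        _ = ζ * w := e2
    have : (1:ℂ) * w = ζ * w := by rw [one_mul, ← hww]
    exact (mul_right_cancel₀ hw0 this).symm
  have hFeq : F (Ψ w) = F (Ψ (ζ * w)) := by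
    have q1 : g (Ψ w) = w ^ n := by rw [e3, e1]
    have q2 : g (Ψ (ζ * w)) = w ^ n := by rw [e4, e2, mul_pow, hζn, one_mul]
    have : g (Ψ w) = g (Ψ (ζ * w)) := by rw [q1, q2]
    simpa [hgdef, sub_left_inj] using this
  exact hz₁₂ (hinj ⟨e3s, hz₁0⟩ ⟨e4s, hz₂0⟩ hFeq)

lemma schwarzian_congr {f g : ℂ → ℂ} {z : ℂ} (h : f =ᶠ[𝓝 z] g) :
    schwarzian f z = schwarzian g z := by
  have h1 : deriv f =ᶠ[𝓝 z] deriv g := h.deriv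
  have h2 : deriv (deriv f) =ᶠ[𝓝 z] deriv (deriv g) := h1.deriv
  have h3 : (fun w => deriv (deriv f) w / deriv f w) =ᶠ[𝓝 z]
      (fun w => deriv (deriv g) w / deriv g w) := by
    filter_upwards [h1, h2] with w w1 w2
    rw [w1, w2]
  unfold schwarzian
  rw [h3.deriv_eq, h1.self_of_nhds, h2.self_of_nhds]

lemma schwarzian_differentiableOn {F : ℂ → ℂ} {s : Set ℂ} (hs : IsOpen s)
    (hF : AnalyticOnNhd ℂ F s) (hd : ∀ z ∈ s, deriv F z ≠ 0) :
    DifferentiableOn ℂ (schwarzian F) s := by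
  have h1 : AnalyticOnNhd ℂ (deriv F) s := hF.deriv
  have h2 : AnalyticOnNhd ℂ (deriv (deriv F)) s := h1.deriv
  have hQ : AnalyticOnNhd ℂ (fun w => deriv (deriv F) w / deriv F w) s :=
    fun z hz => (h2 z hz).div (h1 z hz) (hd z hz)
  have hQ' : AnalyticOnNhd ℂ (deriv (fun w => deriv (deriv F) w / deriv F w)) s := hQ.deriv
  have : AnalyticOnNhd ℂ (schwarzian F) s := fun z hz =>
    (hQ' z hz).sub (analyticAt_const.mul ((hQ z hz).pow 2))
  exact this.differentiableOn

lemma schwarzian_mobius {F f : ℂ → ℂ} {s : Set ℂ} {w : ℂ} (hs : IsOpen s)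
    (hF : AnalyticOnNhd ℂ F s) (hF0 : ∀ x ∈ s, F x ≠ 0) (hF1 : ∀ x ∈ s, deriv F x ≠ 0)
    (hf : ∀ x ∈ s, f x = w + (F x)⁻¹) {z : ℂ} (hz : z ∈ s) :
    schwarzian f z = schwarzian F z := by
  have hF' : AnalyticOnNhd ℂ (deriv F) s := hF.deriv
  have hF'' : AnalyticOnNhd ℂ (deriv (deriv F)) s := hF'.deriv
  have hdf : ∀ x ∈ s, deriv f x = -(deriv F x) / (F x) ^ 2 := by
    intro x hx
    have h1 : HasDerivAt (fun y => (F y)⁻¹) (-(deriv F x) / F x ^ 2) x :=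
      ((hF x hx).differentiableAt.hasDerivAt).inv (hF0 x hx)
    have h2 : HasDerivAt (fun y => w + (F y)⁻¹) (-(deriv F x) / F x ^ 2) x := h1.const_add w
    have h3 : HasDerivAt f (-(deriv F x) / F x ^ 2) x :=
      h2.congr_of_eventuallyEq (by filter_upwards [hs.mem_nhds hx] with y hy using hf y hy)
    exact h3.deriv
  have hratio : ∀ x ∈ s, deriv (deriv f) x / deriv f x
      = deriv (deriv F) x / deriv F x - 2 * (deriv F x / F x) := by
    intro x hx
    have hN : HasDerivAt (fun y => -(deriv F y)) (-(deriv (deriv F) x)) x :=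
      ((hF' x hx).differentiableAt.hasDerivAt).neg
    have hD : HasDerivAt (fun y => (F y) ^ 2) ((2 : ℕ) * F x ^ 1 * deriv F x) x :=
      ((hF x hx).differentiableAt.hasDerivAt).pow 2
    have hdiv : HasDerivAt (fun y => -(deriv F y) / (F y) ^ 2)
        ((-(deriv (deriv F) x) * F x ^ 2 - -(deriv F x) * ((2 : ℕ) * F x ^ 1 * deriv F x))
          / (F x ^ 2) ^ 2) x := hN.div hD (pow_ne_zero 2 (hF0 x hx))
    have hev : deriv f =ᶠ[𝓝 x] fun y => -(deriv F y) / (F y) ^ 2 := by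
      filter_upwards [hs.mem_nhds hx] with y hy using hdf y hy
    have hd2 := (hdiv.congr_of_eventuallyEq hev).deriv
    rw [hd2, hdf x hx]
    field_simp [hF0 x hx, hF1 x hx]
    ring
  have ha := hF0 z hz
  have hb := hF1 z hz
  have hQR : (fun x => deriv (deriv f) x / deriv f x) =ᶠ[𝓝 z]
      (fun x => deriv (deriv F) x / deriv F x - 2 * (deriv F x / F x)) := by
    filter_upwards [hs.mem_nhds hz] with y hy using hratio y hy
  have h1 : HasDerivAt (fun x => deriv (deriv F) x / deriv F x)
      ((deriv (deriv (deriv F)) z * deriv F z - deriv (deriv F) z * deriv (deriv F) z)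
        / (deriv F z) ^ 2) z :=
    ((hF'' z hz).differentiableAt.hasDerivAt).div ((hF' z hz).differentiableAt.hasDerivAt) hb
  have h2 : HasDerivAt (fun x => deriv F x / F x)
      ((deriv (deriv F) z * F z - deriv F z * deriv F z) / (F z) ^ 2) z :=
    ((hF' z hz).differentiableAt.hasDerivAt).div ((hF z hz).differentiableAt.hasDerivAt) ha
  have h3 : HasDerivAt (fun x => deriv (deriv F) x / deriv F x - 2 * (deriv F x / F x))
      ((deriv (deriv (deriv F)) z * deriv F z - deriv (deriv F) z * deriv (deriv F) z)
        / (deriv F z) ^ 2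
        - 2 * ((deriv (deriv F) z * F z - deriv F z * deriv F z) / (F z) ^ 2)) z :=
    h1.sub (h2.const_mul 2)
  have e1 : deriv (fun x => deriv (deriv f) x / deriv f x) z
      = (deriv (deriv (deriv F)) z * deriv F z - deriv (deriv F) z * deriv (deriv F) z)
        / (deriv F z) ^ 2
        - 2 * ((deriv (deriv F) z * F z - deriv F z * deriv F z) / (F z) ^ 2) := by
    rw [hQR.deriv_eq]
    exact h3.deriv
  have e2 : deriv (fun x => deriv (deriv F) x / deriv F x) z
      = (deriv (deriv (deriv F)) z * deriv F z - deriv (deriv F) z * deriv (deriv F) z)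
        / (deriv F z) ^ 2 := h1.deriv
  unfold schwarzian
  rw [e1, e2, hratio z hz]
  field_simp [ha, hb]
  ring

/-- If `f` is holomorphic and injective on the punctured unit disc,
then `f'` is nonvanishing there and the Schwarzian derivative `S(f)` extends to a
holomorphic function on the whole unit disc. -/
theorem schwarzian_of_injective_extends_holomorphically
    (f : ℂ → ℂ)
    (hf : DifferentiableOn ℂ f (ball (0 : ℂ) 1 \ {0}))
    (hinj : InjOn f (ball (0 : ℂ) 1 \ {0})) :
    (∀ z ∈ ball (0 : ℂ) 1 \ {0}, deriv f z ≠ 0) ∧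
    ∃ Ξ : ℂ → ℂ, DifferentiableOn ℂ Ξ (ball (0 : ℂ) 1) ∧
      ∀ z ∈ ball (0 : ℂ) 1 \ {0}, Ξ z = schwarzian f z := by
  have hUopen : IsOpen (ball (0 : ℂ) 1 \ {0}) := isOpen_ball.sdiff isClosed_singleton
  have hfa : AnalyticOnNhd ℂ f (ball (0 : ℂ) 1 \ {0}) := hf.analyticOnNhd hUopen
  have partA : ∀ z ∈ ball (0 : ℂ) 1 \ {0}, deriv f z ≠ 0 := fun z hz =>
    key_deriv_ne_zero (hUopen.mem_nhds hz) (hfa z hz) (hinj.mono diff_subset)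
  refine ⟨partA, ?_⟩
  classical
  -- the ball A inside the annulus away from 0
  have hd34 : dist ((3:ℂ)/4) 0 = 3/4 := by
    rw [dist_zero_right, show (3:ℂ)/4 = ((3/4 : ℝ) : ℂ) by norm_num, Complex.norm_real]
    norm_num
  have hAsub : ball ((3:ℂ)/4) (1/8) ⊆ ball (0 : ℂ) 1 \ {0} := by
    intro x hx
    rw [mem_ball] at hx
    constructor
    · rw [mem_ball]
      calc dist x 0 ≤ dist x ((3:ℂ)/4) + dist ((3:ℂ)/4) (0:ℂ) := dist_triangle _ _ _
        _ < 1/8 + 3/4 := by rw [hd34]; linarith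
        _ < 1 := by norm_num
    · intro hx0
      rw [mem_singleton_iff] at hx0
      subst hx0
      rw [dist_comm, hd34] at hx
      norm_num at hx
  have hAfar : ∀ x ∈ ball ((3:ℂ)/4) (1/8), x ∉ ball (0:ℂ) (1/2) := by
    intro x hx hx2
    rw [mem_ball] at hx hx2
    have htri := dist_triangle ((3:ℂ)/4) x (0:ℂ)
    rw [dist_comm ((3:ℂ)/4) x, hd34] at htri
    linarith
  -- f '' A is open
  have himg : IsOpen (f '' ball ((3:ℂ)/4) (1/8)) := by
    rcases (hfa.mono hAsub).is_constant_or_isOpen (convex_ball _ _).isPreconnected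
      with hconst | hopen
    · exfalso
      obtain ⟨v, hv⟩ := hconst
      have hm1 : (3:ℂ)/4 ∈ ball ((3:ℂ)/4) (1/8) := mem_ball_self (by norm_num)
      have hm2 : (3:ℂ)/4 + 1/16 ∈ ball ((3:ℂ)/4) (1/8) := by
        rw [mem_ball, dist_eq_norm,
          show (3:ℂ)/4 + 1/16 - 3/4 = ((1/16 : ℝ) : ℂ) by norm_num, Complex.norm_real]
        norm_num
      have := hinj (hAsub hm1) (hAsub hm2) ((hv _ hm1).trans (hv _ hm2).symm)
      norm_num at this
    · exact hopen _ Subset.rfl isOpen_ball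
  obtain ⟨w, hw⟩ : (f '' ball ((3:ℂ)/4) (1/8)).Nonempty :=
    ⟨f ((3:ℂ)/4), mem_image_of_mem _ (mem_ball_self (by norm_num))⟩
  obtain ⟨ε, hε, hball⟩ := Metric.isOpen_iff.1 himg w hw
  have hV1U : ball (0:ℂ) (1/2) \ {0} ⊆ ball (0 : ℂ) 1 \ {0} :=
    diff_subset_diff_left (ball_subset_ball (by norm_num))
  have hlow : ∀ z ∈ ball (0:ℂ) (1/2) \ {0}, ε ≤ ‖f z - w‖ := by
    intro z hz
    by_contra hlt
    push_neg at hlt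
    have hmem : f z ∈ ball w ε := by rwa [mem_ball, dist_eq_norm]
    obtain ⟨a, ha, hfa'⟩ := hball hmem
    have : a = z := hinj (hAsub ha) (hV1U hz) hfa'
    exact hAfar a ha (this ▸ hz.1)
  have hsub0 : ∀ z ∈ ball (0:ℂ) (1/2) \ {0}, f z - w ≠ 0 := by
    intro z hz h0
    have := hlow z hz
    rw [h0] at this
    simp at this
    linarith
  -- the bounded reciprocal and its extension
  set g : ℂ → ℂ := fun z => (f z - w)⁻¹ with hgdef
  have hgd : DifferentiableOn ℂ g (ball (0:ℂ) (1/2) \ {0}) :=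
    ((hf.mono hV1U).sub (differentiableOn_const w)).inv hsub0
  have hgbdd : BddAbove (norm ∘ g '' (ball (0:ℂ) (1/2) \ {0})) := by
    refine ⟨ε⁻¹, ?_⟩
    rintro y ⟨z, hz, rfl⟩
    simp only [Function.comp_apply, hgdef, norm_inv]
    exact inv_anti₀ hε (hlow z hz)
  have hmem : ball (0:ℂ) (1/2) ∈ 𝓝 (0:ℂ) := ball_mem_nhds _ (by norm_num)
  have hGd : DifferentiableOn ℂ (Function.update g 0 (limUnder (𝓝[≠] 0) g))
      (ball (0:ℂ) (1/2)) :=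
    Complex.differentiableOn_update_limUnder_of_bddAbove hmem hgd hgbdd
  set G := Function.update g 0 (limUnder (𝓝[≠] 0) g) with hGdef
  have hGg : ∀ z ∈ ball (0:ℂ) (1/2) \ {0}, G z = g z := by
    intro z hz
    exact Function.update_of_ne (by simpa using hz.2) _ _
  -- package the two cases
  obtain ⟨ρ, hρpos, hρsub, F, hFd, hFinj, hrel⟩ :
      ∃ ρ > (0:ℝ), ball (0:ℂ) ρ ⊆ ball (0:ℂ) (1/2) ∧ ∃ F : ℂ → ℂ,
        DifferentiableOn ℂ F (ball (0:ℂ) ρ) ∧ InjOn F (ball (0:ℂ) ρ \ {0}) ∧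
        ((∀ z ∈ ball (0:ℂ) ρ \ {0}, F z = f z) ∨
         (∀ z ∈ ball (0:ℂ) ρ \ {0}, F z ≠ 0 ∧ f z = w + (F z)⁻¹)) := by
    rcases eq_or_ne (G 0) 0 with hG0 | hG0
    · refine ⟨1/2, by norm_num, Subset.rfl, G, hGd, ?_, Or.inr ?_⟩
      · intro z₁ h₁ z₂ h₂ he
        rw [hGg z₁ h₁, hGg z₂ h₂] at he
        simp only [hgdef] at he
        have h2 := inv_injective he
        exact hinj (hV1U h₁) (hV1U h₂) (by linear_combination h2)
      · intro z hz
        rw [hGg z hz]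
        simp only [hgdef]
        refine ⟨inv_ne_zero (hsub0 z hz), ?_⟩
        rw [inv_inv]
        ring
    · have hGc : ContinuousAt G 0 := (hGd.differentiableAt hmem).continuousAt
      have hne : ∀ᶠ z in 𝓝 (0:ℂ), G z ≠ 0 := hGc.eventually_ne hG0
      obtain ⟨ρ, hρpos, hρsub⟩ := Metric.mem_nhds_iff.1 (inter_mem hne hmem)
      have hsub2 : ball (0:ℂ) ρ ⊆ ball (0:ℂ) (1/2) := fun x hx => (hρsub hx).2
      have hne2 : ∀ x ∈ ball (0:ℂ) ρ, G x ≠ 0 := fun x hx => (hρsub hx).1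
      have hFf : ∀ z ∈ ball (0:ℂ) ρ \ {0}, w + (G z)⁻¹ = f z := by
        intro z hz
        have hz2 : z ∈ ball (0:ℂ) (1/2) \ {0} := ⟨hsub2 hz.1, hz.2⟩
        rw [hGg z hz2]
        simp only [hgdef]
        rw [inv_inv]
        ring
      refine ⟨ρ, hρpos, hsub2, fun z => w + (G z)⁻¹, ?_, ?_, Or.inl hFf⟩
      · exact (differentiableOn_const w).add ((hGd.mono hsub2).inv hne2)
      · intro z₁ h₁ z₂ h₂ he
        refine hinj (hV1U ⟨hsub2 h₁.1, h₁.2⟩) (hV1U ⟨hsub2 h₂.1, h₂.2⟩) ?_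
        rw [← hFf z₁ h₁, ← hFf z₂ h₂]
        exact he
  have hFa : AnalyticOnNhd ℂ F (ball (0:ℂ) ρ) := hFd.analyticOnNhd isOpen_ball
  have hρopen : IsOpen (ball (0:ℂ) ρ \ {0}) := isOpen_ball.sdiff isClosed_singleton
  have hFne : ∀ z ∈ ball (0:ℂ) ρ, deriv F z ≠ 0 := by
    intro z hz
    rcases eq_or_ne z 0 with rfl | hz0
    · exact key_deriv_ne_zero (isOpen_ball.mem_nhds hz) (hFa _ hz) hFinj
    · exact key_deriv_ne_zero (hρopen.mem_nhds ⟨hz, hz0⟩) (hFa _ hz)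
        (hFinj.mono diff_subset)
  have hSF : DifferentiableOn ℂ (schwarzian F) (ball (0:ℂ) ρ) :=
    schwarzian_differentiableOn isOpen_ball hFa hFne
  have hSeq : ∀ z ∈ ball (0:ℂ) ρ \ {0}, schwarzian F z = schwarzian f z := by
    rcases hrel with hcase | hcase
    · intro z hz
      refine (schwarzian_congr ?_).symm
      filter_upwards [hρopen.mem_nhds hz] with y hy using (hcase y hy).symm
    · intro z hz
      exact (schwarzian_mobius hρopen (hFa.mono diff_subset) (fun x hx => (hcase x hx).1)
        (fun x hx => hFne x hx.1) (fun x hx => (hcase x hx).2) hz).symm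
  have hSf : DifferentiableOn ℂ (schwarzian f) (ball (0:ℂ) 1 \ {0}) :=
    schwarzian_differentiableOn hUopen hfa partA
  refine ⟨fun z => if z ∈ ball (0:ℂ) ρ then schwarzian F z else schwarzian f z, ?_, ?_⟩
  · intro z hz
    rcases eq_or_ne z 0 with rfl | hz0
    · have hzρ : (0:ℂ) ∈ ball (0:ℂ) ρ := mem_ball_self hρpos
      have hev : (fun y => if y ∈ ball (0:ℂ) ρ then schwarzian F y else schwarzian f y)
          =ᶠ[𝓝 (0:ℂ)] schwarzian F := by
        filter_upwards [isOpen_ball.mem_nhds hzρ] with y hy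
        simp [hy]
      exact ((hSF.differentiableAt (isOpen_ball.mem_nhds hzρ)).congr_of_eventuallyEq
        hev).differentiableWithinAt
    · have hev : (fun y => if y ∈ ball (0:ℂ) ρ then schwarzian F y else schwarzian f y)
          =ᶠ[𝓝 z] schwarzian f := by
        filter_upwards [hUopen.mem_nhds ⟨hz, by simpa using hz0⟩] with y hy
        by_cases hyρ : y ∈ ball (0:ℂ) ρ
        · simp only [hyρ, if_true]
          exact hSeq y ⟨hyρ, hy.2⟩
        · simp only [hyρ, if_false]
      exact ((hSf.differentiableAt (hUopen.mem_nhds ⟨hz, by simpa using hz0⟩)).congr_of_eventuallyEq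
        hev).differentiableWithinAt
  · intro z hz
    by_cases hzρ : z ∈ ball (0:ℂ) ρ
    · simp only [hzρ, if_true]
      exact hSeq z ⟨hzρ, hz.2⟩
    · simp only [hzρ, if_false]
end

section
/- Let U ⊆ ℂ be an open set, ξ a holomorphic function on U, and h a holomorphic function on U that is nowhere vanishing and satisfies h″(z) + (1/2)·ξ(z)·h(z) = 0 for all z ∈ U. If φ is a holomorphic function on U with φ′(z) = 1/h(z)² for all z ∈ U, then φ′ is nowhere vanishing and the Schwarzian derivative of φ satisfies S(φ)(z) = ξ(z) for all z ∈ U. -/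
open Complex Metric Set Filter Topology

/-- variation of parameters: if `h` is a nowhere-vanishing holomorphic
solution of `h'' + (1/2)·ξ·h = 0` on an open set `U` and `φ` is holomorphic on `U`
with `φ' = 1/h²`, then `φ'` is nowhere vanishing and `S(φ) = ξ` on `U`. -/
theorem schwarzian_eq_of_ode_solution
    (U : Set ℂ) (hU : IsOpen U) (ξ h φ : ℂ → ℂ)
    (hξ : DifferentiableOn ℂ ξ U)
    (hh : DifferentiableOn ℂ h U)
    (hh0 : ∀ z ∈ U, h z ≠ 0)
    (hode : ∀ z ∈ U, deriv (deriv h) z + (1 / 2) * ξ z * h z = 0)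
    (hφ : DifferentiableOn ℂ φ U)
    (hφ' : ∀ z ∈ U, deriv φ z = 1 / (h z) ^ 2) :
    (∀ z ∈ U, deriv φ z ≠ 0) ∧ ∀ z ∈ U, schwarzian φ z = ξ z := by
  have hha : AnalyticOnNhd ℂ h U := hh.analyticOnNhd hU
  have hd1 : AnalyticOnNhd ℂ (deriv h) U := hha.deriv
  have hhd : ∀ z ∈ U, HasDerivAt h (deriv h z) z := fun z hz =>
    ((hha z hz).differentiableAt).hasDerivAt
  have hhd2 : ∀ z ∈ U, HasDerivAt (deriv h) (deriv (deriv h) z) z := fun z hz =>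
    ((hd1 z hz).differentiableAt).hasDerivAt
  -- second derivative of φ
  have hφ'' : ∀ z ∈ U, deriv (deriv φ) z = -2 * deriv h z / (h z) ^ 3 := by
    intro z hz
    have ev : deriv φ =ᶠ[𝓝 z] fun w => 1 / (h w) ^ 2 := by
      filter_upwards [hU.mem_nhds hz] with w hw using hφ' w hw
    rw [ev.deriv_eq]
    have H : HasDerivAt (fun w => 1 / (h w) ^ 2)
        ((0 * (h z) ^ 2 - 1 * (2 * h z ^ 1 * deriv h z)) / ((h z) ^ 2) ^ 2) z :=
      (hasDerivAt_const z (1 : ℂ)).div ((hhd z hz).pow 2)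
        (pow_ne_zero 2 (hh0 z hz))
    rw [H.deriv]
    have h0 := hh0 z hz
    field_simp
    ring
  -- the quotient φ''/φ' equals -2 h'/h on U
  have hq : ∀ w ∈ U, deriv (deriv φ) w / deriv φ w = -2 * deriv h w / h w := by
    intro w hw
    rw [hφ'' w hw, hφ' w hw]
    have h0 := hh0 w hw
    field_simp
  refine ⟨fun z hz => by
    rw [hφ' z hz]
    exact one_div_ne_zero (pow_ne_zero 2 (hh0 z hz)), ?_⟩
  intro z hz
  have h0 := hh0 z hz
  have ev : (fun w => deriv (deriv φ) w / deriv φ w) =ᶠ[𝓝 z]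
      fun w => -2 * deriv h w / h w := by
    filter_upwards [hU.mem_nhds hz] with w hw using hq w hw
  have H : HasDerivAt (fun w => -2 * deriv h w / h w)
      ((-2 * deriv (deriv h) z * h z - -2 * deriv h z * deriv h z) / (h z) ^ 2) z :=
    ((hhd2 z hz).const_mul (-2)).div (hhd z hz) h0
  have hode' : deriv (deriv h) z = -(1 / 2) * ξ z * h z := by
    have := hode z hz; linear_combination this
  rw [schwarzian, ev.deriv_eq, H.deriv, hq z hz, hode']
  field_simp
  ring
end

section
/- Let G be a holomorphic function on the unit disc 𝔻, let a₋₁ ∈ ℂ with a₋₁ ≠ 0, and set g(z) = a₋₁/z + G(z) on 𝔻*. Let c ∈ ℂ, θ ∈ ℝ, let L be a branch of the logarithm on 𝔻 ∖ l^θ, and put φ(z) = g(z) + (c/(2πi))·L(z) on 𝔻 ∖ l^θ. Then there exists ρ ∈ (0,1) such that φ′ is nonvanishing on B(0,ρ) ∖ l^θ and the function z ↦ S(φ)(z) + c/(a₋₁·π·i·z), defined on B(0,ρ) ∖ l^θ, extends to a holomorphic function on the disc B(0,ρ). In particular the Schwarzian derivative S(φ) has at most a simple pole at 0, with residue −c/(a₋₁·π·i).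 -/
open Complex Metric Set Filter Topology

/-- The closed ray `{t·e^{iθ} : t ≥ 0} ⊆ ℂ`. -/
def lray (θ : ℝ) : Set ℂ :=
  {z : ℂ | ∃ t : ℝ, 0 ≤ t ∧ z = (t : ℂ) * Complex.exp (θ * Complex.I)}

lemma lray_eq (θ : ℝ) : lray θ =
    (fun z : ℂ => z * Complex.exp (-(θ * Complex.I))) ⁻¹' {w : ℂ | w.im = 0 ∧ 0 ≤ w.re} := by
  ext z
  constructor
  · rintro ⟨t, ht, rfl⟩
    have h1 : (t:ℂ) * Complex.exp (θ * Complex.I) * Complex.exp (-(θ * Complex.I)) = (t:ℂ) := by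
      rw [mul_assoc, ← Complex.exp_add]; simp
    simp only [Set.mem_preimage, Set.mem_setOf_eq, h1]
    simp [ht]
  · rintro ⟨him, hre⟩
    refine ⟨(z * Complex.exp (-(θ * Complex.I))).re, hre, ?_⟩
    have : ((z * Complex.exp (-(θ * Complex.I))).re : ℂ) = z * Complex.exp (-(θ * Complex.I)) :=
      (Complex.ext rfl him.symm)
    rw [this, mul_assoc, ← Complex.exp_add]
    simp

lemma isClosed_lray (θ : ℝ) : IsClosed (lray θ) := by
  rw [lray_eq]
  apply IsClosed.preimage (by continuity)
  exact IsClosed.inter (isClosed_eq Complex.continuous_im continuous_const)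
    (isClosed_le continuous_const Complex.continuous_re)

lemma zero_mem_lray (θ : ℝ) : (0:ℂ) ∈ lray θ := ⟨0, le_refl _, by simp⟩

lemma ratio_aux (p p' w : ℂ) (hw : w ≠ 0) (hp : p ≠ 0) :
    ((p' * w ^ 2 - p * ((2:ℕ) * w ^ 1)) / (w ^ 2) ^ 2) / (p / w ^ 2) = p' / p - 2 / w := by
  push_cast
  field_simp

lemma final_aux (q d a c z : ℂ) (hz : z ≠ 0) (ha : a ≠ 0)
    (hπ : (Real.pi : ℂ) ≠ 0) :
    d - 1 / 2 * q ^ 2 + 2 * ((q - (c / (2 * (Real.pi:ℂ) * Complex.I)) / (-a)) / z) =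
      d - 2 * -(z ^ 2)⁻¹ - 1 / 2 * (q - 2 / z) ^ 2
        + c / (a * (Real.pi:ℂ) * Complex.I * z) := by
  have hI : Complex.I ≠ 0 := Complex.I_ne_zero
  have h1 : (2 * (Real.pi:ℂ) * Complex.I) ≠ 0 := by
    simp [hπ, hI]
  have h2 : (a * (Real.pi:ℂ) * Complex.I * z) ≠ 0 := by
    simp [ha, hπ, hI, hz]
  have h3 : (2 * (Real.pi:ℂ) * Complex.I * -a) ≠ 0 := mul_ne_zero h1 (neg_ne_zero.mpr ha)
  rw [div_div]
  have e1 : c / (a * (Real.pi:ℂ) * Complex.I * z) =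
      c / (2 * (Real.pi:ℂ) * Complex.I * -a) * (-2 / z) := by
    rw [div_mul_div_comm]
    rw [div_eq_div_iff h2 (by simpa [mul_comm, mul_assoc, mul_left_comm] using mul_ne_zero h3 hz)]
    ring
  rw [e1]
  generalize c / (2 * (Real.pi:ℂ) * Complex.I * -a) = X
  ring

/-- for `φ(z) = a₋₁/z + G(z) + (c/2πi)·L(z)` (`G` holomorphic on `𝔻`,
`a₋₁ ≠ 0`, `L` a branch of logarithm on `𝔻 ∖ l^θ`), there is `ρ ∈ (0,1)` such that
`φ'` is nonvanishing on `B(0,ρ) ∖ l^θ` and `S(φ)(z) + c/(a₋₁·π·i·z)` extends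
holomorphically to `B(0,ρ)`; i.e. `S(φ)` has at most a simple pole at `0` with
residue `-c/(a₋₁·π·i)`. -/
theorem schwarzian_simple_pole_residue
    (G : ℂ → ℂ) (hG : DifferentiableOn ℂ G (ball (0 : ℂ) 1))
    (a : ℂ) (ha : a ≠ 0) (c : ℂ) (θ : ℝ) (L : ℂ → ℂ)
    (hL : DifferentiableOn ℂ L (ball (0 : ℂ) 1 \ lray θ))
    (hexp : ∀ z ∈ ball (0 : ℂ) 1 \ lray θ, Complex.exp (L z) = z)
    (φ : ℂ → ℂ)
    (hφ : ∀ z ∈ ball (0 : ℂ) 1 \ lray θ,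
      φ z = a / z + G z + c / (2 * (Real.pi : ℂ) * Complex.I) * L z) :
    ∃ ρ : ℝ, 0 < ρ ∧ ρ < 1 ∧
      (∀ z ∈ ball (0 : ℂ) ρ \ lray θ, deriv φ z ≠ 0) ∧
      ∃ h : ℂ → ℂ, DifferentiableOn ℂ h (ball (0 : ℂ) ρ) ∧
        ∀ z ∈ ball (0 : ℂ) ρ \ lray θ,
          h z = schwarzian φ z + c / (a * (Real.pi : ℂ) * Complex.I * z) := by
  have hπ : (Real.pi : ℂ) ≠ 0 := Complex.ofReal_ne_zero.mpr Real.pi_ne_zero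
  set k : ℂ := c / (2 * (Real.pi : ℂ) * Complex.I) with hk
  set U : Set ℂ := ball (0:ℂ) 1 \ lray θ with hUdef
  have hUopen : IsOpen U := isOpen_ball.sdiff (isClosed_lray θ)
  have hUne : ∀ z ∈ U, z ≠ 0 := fun z hz h0 => hz.2 (h0 ▸ zero_mem_lray θ)
  -- analytic data
  have hGan : AnalyticOnNhd ℂ G (ball (0:ℂ) 1) := hG.analyticOnNhd isOpen_ball
  have hG'an : AnalyticOnNhd ℂ (deriv G) (ball (0:ℂ) 1) := hGan.deriv
  set P : ℂ → ℂ := fun w => -a + k * w + w ^ 2 * deriv G w with hPdef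
  have hPan : AnalyticOnNhd ℂ P (ball (0:ℂ) 1) := by
    intro z hz
    exact (analyticAt_const.add (analyticAt_const.mul analyticAt_id)).add
      ((analyticAt_id.pow 2).mul (hG'an z hz))
  have h01 : (0:ℂ) ∈ ball (0:ℂ) 1 := by simp
  have hP0 : P 0 = -a := by simp [hPdef]
  -- choose ρ
  have hPne0 : P 0 ≠ 0 := by rw [hP0]; exact neg_ne_zero.mpr ha
  have hev : ∀ᶠ y in 𝓝 (0:ℂ), P y ≠ 0 := (hPan 0 h01).continuousAt.eventually_ne hPne0
  rw [Metric.eventually_nhds_iff] at hev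
  obtain ⟨ε, hε, hεP⟩ := hev
  refine ⟨min (ε/2) (1/2), by positivity, lt_of_le_of_lt (min_le_right _ _) (by norm_num), ?_⟩
  set ρ := min (ε/2) (1/2) with hρdef
  have hρ0 : 0 < ρ := by positivity
  have hρ1 : ball (0:ℂ) ρ ⊆ ball (0:ℂ) 1 :=
    ball_subset_ball (le_trans (min_le_right _ _) (by norm_num))
  have hPne : ∀ z ∈ ball (0:ℂ) ρ, P z ≠ 0 := by
    intro z hz
    apply hεP
    calc dist z 0 < ρ := mem_ball.mp hz
      _ ≤ ε/2 := min_le_left _ _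
      _ < ε := by linarith
  set V : Set ℂ := ball (0:ℂ) ρ \ lray θ with hVdef
  have hVU : V ⊆ U := fun z hz => ⟨hρ1 hz.1, hz.2⟩
  have hVopen : IsOpen V := isOpen_ball.sdiff (isClosed_lray θ)
  -- derivative of L
  have hL' : ∀ z ∈ U, HasDerivAt L z⁻¹ z := by
    intro z hz
    have hz0 := hUne z hz
    have hd : DifferentiableAt ℂ L z := (hL z hz).differentiableAt (hUopen.mem_nhds hz)
    have h1 : HasDerivAt (fun w => Complex.exp (L w)) (Complex.exp (L z) * deriv L z) z :=
      hd.hasDerivAt.cexp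
    have h2 : (fun w => Complex.exp (L w)) =ᶠ[𝓝 z] id :=
      eventuallyEq_of_mem (hUopen.mem_nhds hz) (fun w hw => hexp w hw)
    have h3 : HasDerivAt id (Complex.exp (L z) * deriv L z) z := h1.congr_of_eventuallyEq h2.symm
    have h4 : Complex.exp (L z) * deriv L z = 1 := h3.unique (hasDerivAt_id z)
    rw [hexp z hz] at h4
    have h5 : deriv L z = z⁻¹ := by field_simp at h4 ⊢; linear_combination h4
    exact h5 ▸ hd.hasDerivAt
  -- derivative of φ
  have hφU : EqOn φ (fun w => a / w + G w + k * L w) U := fun z hz => hφ z hz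
  have hderφ : ∀ z ∈ U, HasDerivAt φ (P z / z ^ 2) z := by
    intro z hz
    have hz0 := hUne z hz
    have h1 : HasDerivAt (fun w : ℂ => a / w) (a * -(z ^ 2)⁻¹) z := by
      simpa [div_eq_mul_inv] using (hasDerivAt_inv hz0).const_mul a
    have h2 : HasDerivAt G (deriv G z) z :=
      ((hG.differentiableAt (isOpen_ball.mem_nhds hz.1)).hasDerivAt)
    have h3 : HasDerivAt (fun w => k * L w) (k * z⁻¹) z := (hL' z hz).const_mul k
    have h4 : HasDerivAt (fun w => a / w + G w + k * L w)
        (a * -(z ^ 2)⁻¹ + deriv G z + k * z⁻¹) z := (h1.add h2).add h3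
    have h5 : HasDerivAt φ (a * -(z ^ 2)⁻¹ + deriv G z + k * z⁻¹) z :=
      h4.congr_of_eventuallyEq (eventuallyEq_of_mem (hUopen.mem_nhds hz) hφU)
    convert h5 using 1
    rw [hPdef]
    field_simp
    ring
  have hdφ : EqOn (deriv φ) (fun w => P w / w ^ 2) U := fun z hz => (hderφ z hz).deriv
  -- nonvanishing
  have hdφne : ∀ z ∈ V, deriv φ z ≠ 0 := by
    intro z hz
    rw [hdφ (hVU hz)]
    exact div_ne_zero (hPne z hz.1) (pow_ne_zero 2 (hUne z (hVU hz)))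
  refine ⟨hdφne, ?_⟩
  -- Q and h
  set Q : ℂ → ℂ := fun w => deriv P w / P w with hQdef
  have hQan : AnalyticOnNhd ℂ Q (ball (0:ℂ) ρ) := fun z hz =>
    ((hPan.deriv z (hρ1 hz)).div (hPan z (hρ1 hz)) (hPne z hz))
  refine ⟨fun w => deriv Q w - (1/2) * (Q w) ^ 2 + 2 * dslope Q 0 w, ?_, ?_⟩
  · have h1 : DifferentiableOn ℂ (deriv Q) (ball (0:ℂ) ρ) :=
      (hQan.deriv).differentiableOn
    have h2 : DifferentiableOn ℂ Q (ball (0:ℂ) ρ) := hQan.differentiableOn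
    have h3 : DifferentiableOn ℂ (dslope Q 0) (ball (0:ℂ) ρ) :=
      (Complex.differentiableOn_dslope (isOpen_ball.mem_nhds (mem_ball_self hρ0))).mpr h2
    exact (h1.sub ((differentiableOn_const _).mul (h2.pow 2))).add
      ((differentiableOn_const _).mul h3)
  -- the identity
  intro z hz
  have hz0 := hUne z (hVU hz)
  have hPz := hPne z hz.1
  have hPd : ∀ w ∈ ball (0:ℂ) ρ, HasDerivAt P (deriv P w) w := fun w hw =>
    ((hPan w (hρ1 hw)).differentiableAt).hasDerivAt
  have hdd : ∀ w ∈ V, HasDerivAt (deriv φ)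
      ((deriv P w * w ^ 2 - P w * ((2:ℕ) * w ^ 1)) / (w ^ 2) ^ 2) w := by
    intro w hw
    have hw0 := hUne w (hVU hw)
    have h1 : HasDerivAt (fun x : ℂ => x ^ 2) ((2:ℕ) * w ^ 1) w := hasDerivAt_pow 2 w
    have h2 := (hPd w hw.1).div h1 (pow_ne_zero 2 hw0)
    exact h2.congr_of_eventuallyEq
      (eventuallyEq_of_mem (hUopen.mem_nhds (hVU hw)) hdφ)
  -- the ratio function
  have hratio : ∀ w ∈ V, deriv (deriv φ) w / deriv φ w = Q w - 2 / w := by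
    intro w hw
    have hw0 := hUne w (hVU hw)
    have hPw := hPne w hw.1
    rw [(hdd w hw).deriv, hdφ (hVU hw)]
    exact ratio_aux (P w) (deriv P w) w hw0 hPw
  -- derivative of the ratio
  have hQz : HasDerivAt Q (deriv Q z) z := ((hQan z hz.1).differentiableAt).hasDerivAt
  have h2w : HasDerivAt (fun w : ℂ => 2 / w) (2 * -(z ^ 2)⁻¹) z := by
    simpa [div_eq_mul_inv] using (hasDerivAt_inv hz0).const_mul (2:ℂ)
  have hQ2 : HasDerivAt (fun w => Q w - 2 / w) (deriv Q z - 2 * -(z ^ 2)⁻¹) z := hQz.sub h2w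
  have hR : HasDerivAt (fun w => deriv (deriv φ) w / deriv φ w)
      (deriv Q z - 2 * -(z ^ 2)⁻¹) z := by
    refine hQ2.congr_of_eventuallyEq ?_
    exact eventuallyEq_of_mem (hVopen.mem_nhds hz) (fun w hw => hratio w hw)
  -- value of Q at 0
  have hP'0 : HasDerivAt P k 0 := by
    have h1 : HasDerivAt (fun w : ℂ => k * w) (k * 1) 0 := (hasDerivAt_id 0).const_mul k
    have h2 : HasDerivAt (fun w : ℂ => w ^ 2) ((2:ℕ) * (0:ℂ) ^ 1) 0 := hasDerivAt_pow 2 0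
    have h3 : HasDerivAt (deriv G) (deriv (deriv G) 0) 0 :=
      ((hG'an 0 h01).differentiableAt).hasDerivAt
    have h4 : HasDerivAt P (0 + k * 1 + (((2:ℕ):ℂ) * (0:ℂ) ^ 1 * deriv G 0 + (0:ℂ) ^ 2 * deriv (deriv G) 0)) 0 := ((hasDerivAt_const (0:ℂ) (-a)).add h1).add (h2.mul h3)
    convert h4 using 1
    simp
  have hQ0 : Q 0 = k / (-a) := by rw [hQdef]; simp [hP'0.deriv, hP0]
  have hds : dslope Q 0 z = (Q z - k / (-a)) / z := by
    rw [dslope_of_ne Q hz0, slope_def_field, hQ0, sub_zero]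
  -- final computation
  rw [schwarzian, hR.deriv, hratio z hz]
  show deriv Q z - 1 / 2 * Q z ^ 2 + 2 * dslope Q 0 z = _
  rw [hds]
  exact final_aux (Q z) (deriv Q z) a c z hz0 ha hπ
end

section
/- Let U ⊆ ℂ be a nonempty open connected set and let (f_k) be a sequence of holomorphic functions on U such that each f_k is injective on U and the images f_k(U) are pairwise disjoint (f_{k₁}(U) ∩ f_{k₂}(U) = ∅ whenever k₁ ≠ k₂). If some subsequence (f_{k_n}) converges locally uniformly on U to a function F, then F is constant. -/
open Complex Metric Set Filter Topology

/-- a locally uniform limit of a subsequence of injective holomorphic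
maps with pairwise disjoint images on a nonempty open connected set is constant. -/
theorem limit_of_disjoint_injective_maps_constant
    (U : Set ℂ) (hU : IsOpen U) (hUc : IsConnected U)
    (f : ℕ → ℂ → ℂ) (F : ℂ → ℂ)
    (hf : ∀ k, DifferentiableOn ℂ (f k) U)
    (hinj : ∀ k, InjOn (f k) U)
    (hdisj : ∀ k₁ k₂, k₁ ≠ k₂ → f k₁ '' U ∩ f k₂ '' U = ∅)
    (κ : ℕ → ℕ) (hκ : StrictMono κ)
    (hconv : TendstoLocallyUniformlyOn (fun n => f (κ n)) F atTop U) :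
    ∃ C : ℂ, ∀ z ∈ U, F z = C := by
  by_contra hcon
  push_neg at hcon
  obtain ⟨z₀, hz₀⟩ := hUc.nonempty
  obtain ⟨z₂, hz₂U, hz₂⟩ := hcon (F z₀)
  set w := F z₀ with hw
  -- F is holomorphic on U (Weierstrass)
  have hF : DifferentiableOn ℂ F U :=
    hconv.differentiableOn (Eventually.of_forall fun n => hf (κ n)) hU
  have hFa : AnalyticOnNhd ℂ F U := hF.analyticOnNhd hU
  -- zeros of F - w are isolated near z₀
  have hne : ∀ᶠ z in 𝓝[≠] z₀, F z ≠ w := by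
    rcases (hFa z₀ hz₀).eventually_eq_or_eventually_ne
        (analyticAt_const : AnalyticAt ℂ (fun _ => w) z₀) with h | h
    · exact absurd
        (hFa.eqOn_of_preconnected_of_eventuallyEq (fun z _ => analyticAt_const)
          hUc.isPreconnected hz₀ h hz₂U) hz₂
    · exact h
  rw [eventually_nhdsWithin_iff] at hne
  obtain ⟨δ, hδ, hδne⟩ := Metric.eventually_nhds_iff.1 hne
  obtain ⟨r₀, hr₀, hr₀U⟩ := Metric.isOpen_iff.1 hU z₀ hz₀
  set r : ℝ := min r₀ δ / 2 with hrdef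
  have hr : 0 < r := by positivity
  have hrr₀ : r < r₀ := lt_of_lt_of_le (half_lt_self (lt_min hr₀ hδ)) (min_le_left _ _)
  have hrδ : r < δ := lt_of_lt_of_le (half_lt_self (lt_min hr₀ hδ)) (min_le_right _ _)
  have hBU : closedBall z₀ r ⊆ U := fun z hz =>
    hr₀U (lt_of_le_of_lt (mem_closedBall.1 hz) hrr₀)
  -- minimum of ‖F - w‖ on the sphere
  obtain ⟨zm, hzm, hmin⟩ := (isCompact_sphere z₀ r).exists_isMinOn
    (NormedSpace.sphere_nonempty.2 hr.le)
    (((hF.continuousOn.mono (sphere_subset_closedBall.trans hBU)).sub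
      continuousOn_const).norm)
  set ε : ℝ := ‖F zm - w‖ with hεdef
  have hzm₀ : zm ≠ z₀ := by
    intro h
    have := mem_sphere.1 hzm
    rw [h, dist_self] at this
    exact hr.ne this
  have hε : 0 < ε := by
    rw [hεdef, norm_pos_iff, sub_ne_zero]
    exact hδne (lt_of_le_of_lt (mem_sphere.1 hzm).le hrδ) (by simpa using hzm₀)
  -- uniform convergence on the closed ball
  have hunif : TendstoUniformlyOn (fun n => f (κ n)) F atTop (closedBall z₀ r) :=
    (tendstoLocallyUniformlyOn_iff_forall_isCompact hU).1 hconv _ hBU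
      (isCompact_closedBall _ _)
  have hev : ∀ᶠ n in atTop, ∀ z ∈ closedBall z₀ r, dist (F z) (f (κ n) z) < ε / 2 :=
    (Metric.tendstoUniformlyOn_iff.1 hunif (ε / 2) (by positivity))
  -- key: eventually f (κ n) attains the value w on U
  have key : ∀ᶠ n in atTop, ∃ z ∈ U, f (κ n) z = w := by
    filter_upwards [hev] with n hn
    by_contra h
    push_neg at h
    have hne' : ∀ z ∈ U, f (κ n) z - w ≠ 0 := fun z hz => sub_ne_zero.2 (h z hz)
    set g : ℂ → ℂ := fun z => (f (κ n) z - w)⁻¹ with hg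
    have hgd : DifferentiableOn ℂ g U :=
      ((hf (κ n)).sub (differentiableOn_const w)).inv hne'
    have hgcl : DiffContOnCl ℂ g (ball z₀ r) := by
      refine ⟨hgd.mono ((ball_subset_closedBall).trans hBU), ?_⟩
      rw [closure_ball z₀ hr.ne']
      exact hgd.continuousOn.mono hBU
    have hbound : ∀ z ∈ frontier (ball z₀ r), ‖g z‖ ≤ 2 / ε := by
      rw [frontier_ball z₀ hr.ne']
      intro z hz
      have h1 : ε ≤ ‖F z - w‖ := hmin hz
      have h2 : ‖f (κ n) z - F z‖ < ε / 2 := by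
        rw [norm_sub_rev, ← dist_eq_norm]
        exact hn z (sphere_subset_closedBall hz)
      have h3 : ε / 2 ≤ ‖f (κ n) z - w‖ := by
        have := norm_sub_norm_le (F z - w) (F z - f (κ n) z)
        have h4 : F z - w - (F z - f (κ n) z) = f (κ n) z - w := by ring
        rw [h4] at this
        rw [norm_sub_rev] at h2
        linarith
      calc ‖g z‖ = ‖f (κ n) z - w‖⁻¹ := by rw [hg, norm_inv]
        _ ≤ (ε / 2)⁻¹ := by gcongr
        _ = 2 / ε := by rw [inv_div]
    have hz₀cl : z₀ ∈ closure (ball z₀ r) := by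
      rw [closure_ball z₀ hr.ne']
      exact mem_closedBall_self hr.le
    have hle : ‖g z₀‖ ≤ 2 / ε :=
      Complex.norm_le_of_forall_mem_frontier_norm_le isBounded_ball hgcl hbound hz₀cl
    have hpos : 0 < ‖f (κ n) z₀ - w‖ :=
      norm_pos_iff.2 (hne' z₀ (hBU (mem_closedBall_self hr.le)))
    have hge : ε / 2 ≤ ‖f (κ n) z₀ - w‖ := by
      rw [hg, norm_inv] at hle
      have h2ε : (0:ℝ) < 2 / ε := by positivity
      have := (inv_le_inv₀ h2ε (by positivity)).2 hle
      rwa [inv_inv, inv_div] at this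
    have hlt : ‖f (κ n) z₀ - w‖ < ε / 2 := by
      have := hn z₀ (mem_closedBall_self hr.le)
      rw [← hw, dist_eq_norm, norm_sub_rev] at this
      exact this
    linarith
  obtain ⟨N, hN⟩ := eventually_atTop.1 key
  obtain ⟨a, haU, ha⟩ := hN N le_rfl
  obtain ⟨b, hbU, hb⟩ := hN (N + 1) (Nat.le_succ N)
  have hmem : w ∈ f (κ N) '' U ∩ f (κ (N + 1)) '' U :=
    ⟨⟨a, haU, ha⟩, ⟨b, hbU, hb⟩⟩
  rw [hdisj (κ N) (κ (N + 1)) (hκ.injective.ne (Nat.succ_ne_self N).symm)] at hmem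
  exact hmem
end
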